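/- Let 𝓕 be a family of holomorphic functions on a domain D ⊆ ℂ. If the generalized escaping like set U(𝓕) has empty interior, then the Julia like set J(𝓕) is either empty or a perfect set (i.e. J(𝓕) is closed in D and has no isolated points). -/

import Mathlib

open Filter Topology Set

/-- Locally uniform divergence to `∞` on the set `s`: on every compact subset of `s`,
the moduli eventually exceed every bound, uniformly. -/
def TendstoLocallyUniformlyOnInfty (F : ℕ → ℂ → ℂ) (s : Set ℂ) : Prop :=
  ∀ K ⊆ s, IsCompact K → ∀ M : ℝ, ∀ᶠ n in Filter.atTop, ∀ z ∈ K, M ≤ ‖F n z‖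

/-- The family `𝓕` of functions holomorphic on `D` is normal at `z₀ ∈ D`: there is a
neighborhood `N ⊆ D` of `z₀` on which every sequence from `𝓕` has a subsequence converging
locally uniformly either to a holomorphic function or to `∞`. -/
def NormalAt (D : Set ℂ) (𝓕 : Set (ℂ → ℂ)) (z₀ : ℂ) : Prop :=
  ∃ N, N ⊆ D ∧ N ∈ 𝓝 z₀ ∧ ∀ f : ℕ → ℂ → ℂ, (∀ n, f n ∈ 𝓕) →
    ∃ φ : ℕ → ℕ, StrictMono φ ∧
      ((∃ g : ℂ → ℂ, DifferentiableOn ℂ g N ∧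
          TendstoLocallyUniformlyOn (fun n => f (φ n)) g Filter.atTop N) ∨
        TendstoLocallyUniformlyOnInfty (fun n => f (φ n)) N)

/-- The Fatou like set of `𝓕` on `D`: points of `D` where `𝓕` is normal. -/
def FatouSet (D : Set ℂ) (𝓕 : Set (ℂ → ℂ)) : Set ℂ := {z | z ∈ D ∧ NormalAt D 𝓕 z}

/-- The Julia like set of `𝓕` on `D`. -/
def JuliaSet (D : Set ℂ) (𝓕 : Set (ℂ → ℂ)) : Set ℂ := D \ FatouSet D 𝓕

/-- The backward orbit of `z` with respect to `𝓕`. -/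
def BackwardOrbit (D : Set ℂ) (𝓕 : Set (ℂ → ℂ)) (z : ℂ) : Set ℂ :=
  {w | w ∈ D ∧ ∃ f ∈ 𝓕, f w = z}

/-- The exceptional set of `𝓕`: points with finite backward orbit. -/
def ExceptionalSet (D : Set ℂ) (𝓕 : Set (ℂ → ℂ)) : Set ℂ :=
  {z | (BackwardOrbit D 𝓕 z).Finite}

/-- The escaping like set `I(𝓕)`: points `z ∈ D` such that `f n z → ∞` for every
infinite (i.e. injective) sequence `f` in `𝓕`. -/
def EscapingSet (D : Set ℂ) (𝓕 : Set (ℂ → ℂ)) : Set ℂ :=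
  {z | z ∈ D ∧ ∀ f : ℕ → ℂ → ℂ, (∀ n, f n ∈ 𝓕) → Function.Injective f →
    Filter.Tendsto (fun n => ‖f n z‖) Filter.atTop Filter.atTop}

/-- The generalized escaping like set `U(𝓕)`: points `z ∈ D` such that `f n z → ∞` for some
sequence `f` in `𝓕`. -/
def GenEscapingSet (D : Set ℂ) (𝓕 : Set (ℂ → ℂ)) : Set ℂ :=
  {z | z ∈ D ∧ ∃ f : ℕ → ℂ → ℂ, (∀ n, f n ∈ 𝓕) ∧
    Filter.Tendsto (fun n => ‖f n z‖) Filter.atTop Filter.atTop}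

/-- A transcendental entire function: entire and not a polynomial. -/
def TranscendentalEntire (f : ℂ → ℂ) : Prop :=
  Differentiable ℂ f ∧ ¬ ∃ p : Polynomial ℂ, ∀ z, f z = p.eval z

/-- Boundary of `A` relative to `D`; for `D` open and `A ⊆ D` this coincides with the
boundary of `A` in the subspace topology of `D`. -/
def relBoundary (D A : Set ℂ) : Set ℂ := D ∩ frontier A

/-- Closure of `A` in `D`; for `D` open and `A ⊆ D` this coincides with the closure of `A`
in the subspace topology of `D`. -/
def relClosure (D A : Set ℂ) : Set ℂ := D ∩ closure A

lemma tuo_comp_subseq {F : ℕ → ℂ → ℂ} {g : ℂ → ℂ} {K : Set ℂ} {φ : ℕ → ℕ}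
    (h : TendstoUniformlyOn F g atTop K) (hφ : StrictMono φ) :
    TendstoUniformlyOn (fun n => F (φ n)) g atTop K := fun u hu =>
  (hφ.tendsto_atTop).eventually (h u hu)

lemma exists_subseq_forall {ι : Type*} (𝓕 : Set (ℂ → ℂ)) (Q : ι → (ℕ → ℂ → ℂ) → Prop)
    (hmono : ∀ i (F : ℕ → ℂ → ℂ) (φ : ℕ → ℕ), StrictMono φ → Q i F → Q i (fun n => F (φ n)))
    (t : Set ι) (ht : t.Finite) :
    (∀ i ∈ t, ∀ F : ℕ → ℂ → ℂ, (∀ n, F n ∈ 𝓕) →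
        ∃ φ, StrictMono φ ∧ Q i (fun n => F (φ n))) →
    ∀ F : ℕ → ℂ → ℂ, (∀ n, F n ∈ 𝓕) →
      ∃ φ, StrictMono φ ∧ ∀ i ∈ t, Q i (fun n => F (φ n)) := by
  refine Set.Finite.induction_on (motive := fun t _ => (∀ i ∈ t, ∀ F : ℕ → ℂ → ℂ, (∀ n, F n ∈ 𝓕) →
        ∃ φ, StrictMono φ ∧ Q i (fun n => F (φ n))) →
      ∀ F : ℕ → ℂ → ℂ, (∀ n, F n ∈ 𝓕) →
        ∃ φ, StrictMono φ ∧ ∀ i ∈ t, Q i (fun n => F (φ n))) t ht (fun _ F hF => ⟨id, strictMono_id, by simp⟩) ?_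
  intro a s ha hs ih hQ F hF
  obtain ⟨φ, hφ, hall⟩ := ih (fun i hi => hQ i (mem_insert_of_mem _ hi)) F hF
  obtain ⟨ψ, hψ, hQa⟩ := hQ a (mem_insert _ _) (fun n => F (φ n)) (fun n => hF _)
  refine ⟨φ ∘ ψ, hφ.comp hψ, ?_⟩
  rintro i (rfl | hi)
  · exact hQa
  · exact hmono i _ ψ hψ (hall i hi)

/-- Key lemma: if a punctured neighbourhood of `z₀ ∈ D` lies in the Fatou set and the
generalized escaping set has empty interior, then `𝓕` is normal at `z₀`. -/
lemma normalAt_of_punctured (D : Set ℂ) (hD : IsOpen D) (𝓕 : Set (ℂ → ℂ))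
    (hol : ∀ f ∈ 𝓕, DifferentiableOn ℂ f D)
    (hint : interior (GenEscapingSet D 𝓕) = ∅)
    (z₀ : ℂ) (hz₀ : z₀ ∈ D) (W : Set ℂ) (hW : W ∈ 𝓝 z₀)
    (hWF : ∀ w ∈ W ∩ D, w ≠ z₀ → w ∈ FatouSet D 𝓕) : NormalAt D 𝓕 z₀ := by
  -- choose a closed ball inside W ∩ D
  obtain ⟨r, hr, hball⟩ := (Metric.nhds_basis_closedBall.mem_iff).1
    (Filter.inter_mem hW (hD.mem_nhds hz₀))
  -- the sphere lies in the Fatou set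
  have hSF : ∀ w ∈ Metric.sphere z₀ r, NormalAt D 𝓕 w := by
    intro w hw
    have hwcb : w ∈ Metric.closedBall z₀ r := Metric.sphere_subset_closedBall hw
    have hwz : w ≠ z₀ := by
      intro h; rw [h] at hw
      simp [Metric.mem_sphere, dist_self] at hw
      exact hr.ne hw
    exact (hWF w (hball hwcb) hwz).2
  -- extract, for each sphere point, a closed ball inside the interior of its normality nbhd
  have key : ∀ w ∈ Metric.sphere z₀ r, ∃ ρ > (0:ℝ), ∃ N : Set ℂ, N ⊆ D ∧
      Metric.closedBall w ρ ⊆ interior N ∧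
      ∀ f : ℕ → ℂ → ℂ, (∀ n, f n ∈ 𝓕) → ∃ φ : ℕ → ℕ, StrictMono φ ∧
        ((∃ g : ℂ → ℂ, DifferentiableOn ℂ g N ∧
            TendstoLocallyUniformlyOn (fun n => f (φ n)) g Filter.atTop N) ∨
          TendstoLocallyUniformlyOnInfty (fun n => f (φ n)) N) := by
    intro w hw
    obtain ⟨N, hND, hNw, hNP⟩ := hSF w hw
    have hi : interior N ∈ 𝓝 w :=
      isOpen_interior.mem_nhds (mem_interior_iff_mem_nhds.2 hNw)
    obtain ⟨ρ, hρ, hρball⟩ := (Metric.nhds_basis_closedBall.mem_iff).1 hi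
    exact ⟨ρ, hρ, N, hND, hρball, hNP⟩
  choose! ρ hρ N hND hNball hNP using key
  -- the ∞ branch is impossible on any of these neighbourhoods
  have noInf : ∀ w ∈ Metric.sphere z₀ r, ∀ G : ℕ → ℂ → ℂ, (∀ n, G n ∈ 𝓕) →
      ¬ TendstoLocallyUniformlyOnInfty G (N w) := by
    intro w hw G hG hcon
    have hsub : interior (N w) ⊆ GenEscapingSet D 𝓕 := by
      intro z hz
      refine ⟨hND w hw (interior_subset hz), G, hG, ?_⟩
      rw [tendsto_atTop]
      intro M
      have := hcon {z} (singleton_subset_iff.2 (interior_subset hz)) isCompact_singleton M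
      exact this.mono fun n h => h z rfl
    have h0 : interior (N w) ⊆ interior (GenEscapingSet D 𝓕) :=
      interior_maximal hsub isOpen_interior
    rw [hint] at h0
    exact h0 (hNball w hw (Metric.mem_closedBall_self (hρ w hw).le))
  -- finite subcover of the sphere
  have hScomp : IsCompact (Metric.sphere z₀ r) := isCompact_sphere z₀ r
  obtain ⟨t, htS, htfin, htcov⟩ := hScomp.elim_finite_subcover_image
    (fun w (_ : w ∈ Metric.sphere z₀ r) => Metric.isOpen_ball)
    (fun z hz => mem_iUnion₂.2 ⟨z, hz, Metric.mem_ball_self (hρ z hz)⟩)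
  -- the normality neighbourhood
  refine ⟨Metric.ball z₀ r, (Metric.ball_subset_closedBall.trans hball).trans inter_subset_right,
    Metric.ball_mem_nhds z₀ hr, ?_⟩
  intro f hf
  -- extract a subsequence converging uniformly on each of the finitely many closed balls
  have hQ : ∀ w ∈ t, ∀ F : ℕ → ℂ → ℂ, (∀ n, F n ∈ 𝓕) → ∃ φ : ℕ → ℕ, StrictMono φ ∧
      (∃ g : ℂ → ℂ, TendstoUniformlyOn (fun n => F (φ n)) g atTop
        (Metric.closedBall w (ρ w))) := by
    intro w hw F hF
    have hwS := htS hw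
    obtain ⟨φ, hφ, hcase⟩ := hNP w hwS F hF
    rcases hcase with ⟨g, hgd, hglu⟩ | hinf
    · refine ⟨φ, hφ, g, ?_⟩
      have := (hglu.mono interior_subset)
      exact (tendstoLocallyUniformlyOn_iff_forall_isCompact isOpen_interior).1 this
        (Metric.closedBall w (ρ w)) (hNball w hwS) (isCompact_closedBall w (ρ w))
    · exact absurd hinf (noInf w hwS _ (fun n => hF (φ n)))
  obtain ⟨φ, hφ, hall⟩ := exists_subseq_forall 𝓕
    (fun w G => ∃ g : ℂ → ℂ, TendstoUniformlyOn G g atTop (Metric.closedBall w (ρ w)))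
    (fun i F ψ hψ ⟨g, hg⟩ => ⟨g, tuo_comp_subseq hg hψ⟩) t htfin hQ f hf
  choose! g hg using hall
  set F : ℕ → ℂ → ℂ := fun n => f (φ n) with hF
  have hFmem : ∀ n, F n ∈ 𝓕 := fun n => hf (φ n)
  -- uniformly Cauchy on the sphere
  have cauchyS : ∀ ε > (0:ℝ), ∃ n₀ : ℕ, ∀ m ≥ n₀, ∀ k ≥ n₀,
      ∀ z ∈ Metric.sphere z₀ r, dist (F m z) (F k z) < ε := by
    intro ε hε
    have : ∀ w ∈ t, ∃ n₀ : ℕ, ∀ m ≥ n₀, ∀ k ≥ n₀,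
        ∀ z ∈ Metric.closedBall w (ρ w), dist (F m z) (F k z) < ε := by
      intro w hw
      have := (hg w hw).uniformCauchySeqOn
      exact (Metric.uniformCauchySeqOn_iff.1 this) ε hε
    choose! n₀ hn₀ using this
    refine ⟨htfin.toFinset.sup n₀, fun m hm k hk z hz => ?_⟩
    obtain ⟨w, hw, hzw⟩ := mem_iUnion₂.1 (htcov hz)
    have hwle : n₀ w ≤ htfin.toFinset.sup n₀ :=
      Finset.le_sup (htfin.mem_toFinset.2 hw)
    exact hn₀ w hw m (hwle.trans hm) k (hwle.trans hk) z (Metric.ball_subset_closedBall hzw)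
  -- extend to the closed ball by the maximum principle
  have hcbD : Metric.closedBall z₀ r ⊆ D := hball.trans inter_subset_right
  have cauchyCB : UniformCauchySeqOn F atTop (Metric.closedBall z₀ r) := by
    rw [Metric.uniformCauchySeqOn_iff]
    intro ε hε
    obtain ⟨n₀, hn₀⟩ := cauchyS (ε / 2) (by linarith)
    refine ⟨n₀, fun m hm k hk z hz => ?_⟩
    have hd : DiffContOnCl ℂ (fun z => F m z - F k z) (Metric.ball z₀ r) := by
      apply DifferentiableOn.diffContOnCl
      rw [closure_ball z₀ hr.ne']
      exact ((hol _ (hFmem m)).mono hcbD).sub ((hol _ (hFmem k)).mono hcbD)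
    have hbd : ∀ x ∈ frontier (Metric.ball z₀ r), ‖F m x - F k x‖ ≤ ε / 2 := by
      intro x hx
      rw [frontier_ball z₀ hr.ne'] at hx
      rw [← dist_eq_norm]
      exact (hn₀ m hm k hk x hx).le
    have hzc : z ∈ closure (Metric.ball z₀ r) := by
      rw [closure_ball z₀ hr.ne']; exact hz
    have := Complex.norm_le_of_forall_mem_frontier_norm_le Metric.isBounded_ball hd hbd hzc
    rw [dist_eq_norm]
    linarith
  -- pointwise limits
  have hptw : ∀ z ∈ Metric.closedBall z₀ r, ∃ l, Tendsto (fun n => F n z) atTop (𝓝 l) := by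
    intro z hz
    apply cauchySeq_tendsto_of_complete
    rw [Metric.cauchySeq_iff]
    intro ε hε
    obtain ⟨n₀, hn₀⟩ := Metric.uniformCauchySeqOn_iff.1 cauchyCB ε hε
    exact ⟨n₀, fun m hm k hk => hn₀ m hm k hk z hz⟩
  choose! G hG using hptw
  have hunif : TendstoUniformlyOn F G atTop (Metric.closedBall z₀ r) :=
    cauchyCB.tendstoUniformlyOn_of_tendsto hG
  have hlocu : TendstoLocallyUniformlyOn F G atTop (Metric.ball z₀ r) :=
    hunif.tendstoLocallyUniformlyOn.mono Metric.ball_subset_closedBall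
  have hGdiff : DifferentiableOn ℂ G (Metric.ball z₀ r) :=
    hlocu.differentiableOn
      (Eventually.of_forall fun n =>
        (hol _ (hFmem n)).mono (Metric.ball_subset_closedBall.trans hcbD))
      Metric.isOpen_ball
  exact ⟨φ, hφ, Or.inl ⟨G, hGdiff, hlocu⟩⟩

theorem julia_empty_or_perfect_of_genEscaping_empty_interior
    (D : Set ℂ) (hD : IsOpen D) (hDconn : IsConnected D)
    (𝓕 : Set (ℂ → ℂ)) (hol : ∀ f ∈ 𝓕, DifferentiableOn ℂ f D)
    (hint : interior (GenEscapingSet D 𝓕) = ∅) :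
    JuliaSet D 𝓕 = ∅ ∨
      (D ∩ closure (JuliaSet D 𝓕) ⊆ JuliaSet D 𝓕 ∧
        ∀ z₀ ∈ JuliaSet D 𝓕, ∀ N ∈ 𝓝 z₀,
          ((N ∩ JuliaSet D 𝓕) \ {z₀}).Nonempty) := by
  by_cases hJ : JuliaSet D 𝓕 = ∅
  · exact Or.inl hJ
  refine Or.inr ⟨?_, ?_⟩
  · -- closedness in D
    rintro z ⟨hzD, hzcl⟩
    by_contra hzJ
    have hzF : z ∈ FatouSet D 𝓕 := by
      by_contra h
      exact hzJ ⟨hzD, h⟩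
    obtain ⟨N, hND, hNz, hNP⟩ := hzF.2
    have hdisj : interior N ∩ JuliaSet D 𝓕 = ∅ := by
      ext y; simp only [mem_inter_iff, mem_empty_iff_false, iff_false, not_and]
      intro hy hyJ
      exact hyJ.2 ⟨hyJ.1, N, hND, mem_interior_iff_mem_nhds.1 hy, hNP⟩
    obtain ⟨y, hy⟩ := mem_closure_iff.1 hzcl (interior N) isOpen_interior
      (mem_interior_iff_mem_nhds.2 hNz)
    exact absurd hdisj (by rw [Set.eq_empty_iff_forall_notMem]; push_neg; exact ⟨y, hy⟩)
  · -- no isolated points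
    intro z₀ hz₀ W hW
    by_contra hne
    rw [Set.not_nonempty_iff_eq_empty, diff_eq_empty] at hne
    have hWF : ∀ w ∈ W ∩ D, w ≠ z₀ → w ∈ FatouSet D 𝓕 := by
      rintro w ⟨hwW, hwD⟩ hwz
      by_contra h
      exact hwz (hne ⟨hwW, hwD, h⟩)
    exact hz₀.2 ⟨hz₀.1, normalAt_of_punctured D hD 𝓕 hol hint z₀ hz₀.1 W hW hWF⟩
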